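/- For a chain cost with unique minimizer, there exists a finite threshold τ* such that for all τ > τ*, the argmax of the Half Partial Trace vector P(τ) equals the optimal first coordinate: argmax_i ∑_{x : x_0 = i} e^{−τ C(x)} = x_opt,0. -/

import Mathlib

/-- For a cost with unique minimizer, there is a finite threshold `τ*` such that for
all `τ > τ*` the argmax of the Half Partial Trace vector is the optimal first
coordinate. -/
theorem trace_argmax_threshold (N : ℕ) (D : Fin (N + 1) → ℕ)
    (C : (∀ n, Fin (D n)) → ℝ) (xopt : ∀ n, Fin (D n))
    (hopt : ∀ y, y ≠ xopt → C xopt < C y) :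
    ∃ τstar : ℝ, ∀ τ > τstar, ∀ i : Fin (D 0), i ≠ xopt 0 →
      (∑ x : ∀ n, Fin (D n), if x 0 = i then Real.exp (-τ * C x) else 0)
        < ∑ x : ∀ n, Fin (D n), if x 0 = xopt 0 then Real.exp (-τ * C x) else 0 := by
  classical
  have hR : ∀ τ : ℝ, Real.exp (-τ * C xopt)
      ≤ ∑ x : ∀ n, Fin (D n), if x 0 = xopt 0 then Real.exp (-τ * C x) else 0 := by
    intro τ
    have := Finset.single_le_sum
      (f := fun x : ∀ n, Fin (D n) => if x 0 = xopt 0 then Real.exp (-τ * C x) else 0)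
      (fun x _ => by split <;> [exact (Real.exp_pos _).le; exact le_refl 0])
      (Finset.mem_univ xopt)
    simpa using this
  by_cases hS : ∃ y : (∀ n, Fin (D n)), y ≠ xopt
  · obtain ⟨y0, hy0⟩ := hS
    set S : Finset (∀ n, Fin (D n)) := Finset.univ.filter (· ≠ xopt) with hSdef
    have hSne : S.Nonempty := ⟨y0, by simp [hSdef, hy0]⟩
    set ε : ℝ := S.inf' hSne (fun y => C y - C xopt) with hε
    have hεpos : 0 < ε := by
      rw [hε, Finset.lt_inf'_iff]
      intro y hy
      have hyne : y ≠ xopt := by simpa [hSdef] using hy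
      linarith [hopt y hyne]
    set K : ℕ := Fintype.card (∀ n, Fin (D n)) with hK
    have hKpos : (0 : ℝ) < K := by
      have : Nonempty (∀ n, Fin (D n)) := ⟨xopt⟩
      exact_mod_cast Fintype.card_pos
    refine ⟨max 0 (Real.log K / ε), ?_⟩
    intro τ hτ i hi
    have hτ0 : 0 < τ := lt_of_le_of_lt (le_max_left _ _) hτ
    have hτε : Real.log K < τ * ε := by
      have h1 : Real.log K / ε < τ := lt_of_le_of_lt (le_max_right _ _) hτ
      calc Real.log K = (Real.log K / ε) * ε := by field_simp
        _ < τ * ε := mul_lt_mul_of_pos_right h1 hεpos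
    have hgap : ∀ x : ∀ n, Fin (D n), x 0 = i → C xopt + ε ≤ C x := by
      intro x hx
      have hxne : x ≠ xopt := by
        intro h; subst h; exact hi hx.symm
      have : ε ≤ C x - C xopt :=
        Finset.inf'_le (fun y => C y - C xopt) (by simp [hSdef, hxne])
      linarith
    have hL : (∑ x : ∀ n, Fin (D n), if x 0 = i then Real.exp (-τ * C x) else 0)
        ≤ (K : ℝ) * Real.exp (-τ * (C xopt + ε)) := by
      calc (∑ x : ∀ n, Fin (D n), if x 0 = i then Real.exp (-τ * C x) else 0)
          = ∑ x ∈ Finset.univ.filter (fun x : ∀ n, Fin (D n) => x 0 = i),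
              Real.exp (-τ * C x) := (Finset.sum_filter _ _).symm
        _ ≤ ∑ x ∈ Finset.univ.filter (fun x : ∀ n, Fin (D n) => x 0 = i),
              Real.exp (-τ * (C xopt + ε)) := by
            apply Finset.sum_le_sum
            intro x hx
            apply Real.exp_le_exp.mpr
            have := hgap x (by simpa using hx)
            nlinarith
        _ = ((Finset.univ.filter (fun x : ∀ n, Fin (D n) => x 0 = i)).card : ℝ)
              * Real.exp (-τ * (C xopt + ε)) := by
            rw [Finset.sum_const, nsmul_eq_mul]
        _ ≤ (K : ℝ) * Real.exp (-τ * (C xopt + ε)) := by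
            apply mul_le_mul_of_nonneg_right _ (Real.exp_pos _).le
            have := Finset.card_filter_le (Finset.univ : Finset (∀ n, Fin (D n)))
              (fun x => x 0 = i)
            exact_mod_cast this.trans_eq (Finset.card_univ)
    have hKlt : (K : ℝ) * Real.exp (-(τ * ε)) < 1 := by
      have h1 : (K : ℝ) < Real.exp (τ * ε) := by
        calc (K : ℝ) = Real.exp (Real.log K) := (Real.exp_log hKpos).symm
          _ < Real.exp (τ * ε) := Real.exp_lt_exp.mpr hτε
      have hmul : Real.exp (τ * ε) * Real.exp (-(τ * ε)) = 1 := by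
        rw [← Real.exp_add]; simp
      nlinarith [Real.exp_pos (-(τ * ε)), Real.exp_pos (τ * ε)]
    have hmid : (K : ℝ) * Real.exp (-τ * (C xopt + ε)) < Real.exp (-τ * C xopt) := by
      have hsplit : Real.exp (-τ * (C xopt + ε))
          = Real.exp (-(τ * ε)) * Real.exp (-τ * C xopt) := by
        rw [← Real.exp_add]; ring_nf
      rw [hsplit, ← mul_assoc]
      nlinarith [Real.exp_pos (-τ * C xopt), Real.exp_pos (-(τ * ε))]
    exact lt_of_le_of_lt hL (lt_of_lt_of_le hmid (hR τ))
  · push_neg at hS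
    refine ⟨0, ?_⟩
    intro τ _ i hi
    have hL : (∑ x : ∀ n, Fin (D n), if x 0 = i then Real.exp (-τ * C x) else 0) = 0 := by
      apply Finset.sum_eq_zero
      intro x _
      rw [hS x, if_neg (fun h => hi h.symm)]
    rw [hL]
    exact lt_of_lt_of_le (Real.exp_pos _) (hR τ)
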